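/- ∫₀¹ √(z(1−z)/(1+z)) dz = (4·Γ(3/4)² + Γ(−3/4)·Γ(5/4)) / (2·√(2π)), where Γ is the Gamma function; equivalently, h(1) = −(4Γ(3/4)² + Γ(−3/4)Γ(5/4))/√(2π), and in particular h(1) < 0. -/

import Mathlib

open MeasureTheory Real Filter

/-- `u r z = √(z(1−rz)/(z+r))`, the real branch of `|w_r|` on `(0, 1/r)`. -/
noncomputable def u (r z : ℝ) : ℝ := Real.sqrt (z * (1 - r * z) / (z + r))

/-- The period function `h` of the candidate maximal Klein bottles. -/
noncomputable def h (r : ℝ) : ℝ :=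
  ∫ z in (0:ℝ)..(1/r),
    -2 * u r z * (-1 + z + r * (2 - 3 * z + r * (-4 + 4 * r + 3 * z))) / (r + z)

/-- `A₁ r = ∫₀^{1/r} u_r(z) dz`. -/
noncomputable def A₁ (r : ℝ) : ℝ := ∫ z in (0:ℝ)..(1/r), u r z

/-- `A₂ r = ∫₀^{1/r} u_r(z)/(z+r) dz`. -/
noncomputable def A₂ (r : ℝ) : ℝ := ∫ z in (0:ℝ)..(1/r), u r z / (z + r)

lemma realBeta {a b : ℝ} (ha : 0 < a) (hb : 0 < b) :
    ∫ t in (0:ℝ)..1, t ^ (a-1) * (1-t) ^ (b-1)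
      = Real.Gamma a * Real.Gamma b / Real.Gamma (a+b) := by
  have key := Complex.Gamma_mul_Gamma_eq_betaIntegral (s := (a:ℂ)) (t := (b:ℂ))
    (by simpa using ha) (by simpa using hb)
  have hβ : Complex.betaIntegral a b
      = ((∫ t in (0:ℝ)..1, t ^ (a-1) * (1-t) ^ (b-1) : ℝ) : ℂ) := by
    rw [Complex.betaIntegral, ← intervalIntegral.integral_ofReal]
    refine intervalIntegral.integral_congr fun x hx => ?_
    rw [Set.uIcc_of_le zero_le_one] at hx
    rw [show ((a:ℂ)-1) = ((a-1:ℝ):ℂ) by push_cast; ring,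
      show ((b:ℂ)-1) = ((b-1:ℝ):ℂ) by push_cast; ring,
      show (1 - (x:ℂ)) = ((1-x:ℝ):ℂ) by push_cast; ring,
      ← Complex.ofReal_cpow hx.1, ← Complex.ofReal_cpow (by linarith [hx.2]),
      ← Complex.ofReal_mul]
  have hG : Real.Gamma (a+b) ≠ 0 := (Real.Gamma_pos_of_pos (by linarith)).ne'
  rw [hβ, Complex.Gamma_ofReal, Complex.Gamma_ofReal,
    show ((a:ℂ)+(b:ℂ)) = ((a+b : ℝ) : ℂ) by push_cast; ring, Complex.Gamma_ofReal,
    ← Complex.ofReal_mul, ← Complex.ofReal_mul] at key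
  have := Complex.ofReal_injective key
  field_simp
  linarith [this]

lemma betaIntegrable {a b : ℝ} (ha : 0 < a) (hb : 0 < b) :
    IntervalIntegrable (fun t => t ^ (a-1) * (1-t) ^ (b-1)) volume 0 1 := by
  have hc := Complex.betaIntegral_convergent (u := (a:ℂ)) (v := (b:ℂ))
    (by simpa using ha) (by simpa using hb)
  rw [intervalIntegrable_iff_integrableOn_Ioc_of_le zero_le_one] at hc ⊢
  refine IntegrableOn.congr_fun hc.re (fun x hx => ?_) measurableSet_Ioc
  have h0 : (0:ℝ) ≤ x := hx.1.le
  have h1 : (0:ℝ) ≤ 1 - x := by linarith [hx.2]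
  rw [show ((a:ℂ)-1) = ((a-1:ℝ):ℂ) by push_cast; ring,
    show ((b:ℂ)-1) = ((b-1:ℝ):ℂ) by push_cast; ring,
    show (1 - (x:ℂ)) = ((1-x:ℝ):ℂ) by push_cast; ring,
    ← Complex.ofReal_cpow h0, ← Complex.ofReal_cpow h1, ← Complex.ofReal_mul]
  simp

lemma sq_image : (fun z : ℝ => z ^ 2) '' Set.Ioo 0 1 = Set.Ioo (0:ℝ) 1 := by
  ext x
  constructor
  · rintro ⟨z, ⟨hz0, hz1⟩, rfl⟩
    exact ⟨by positivity, by dsimp only; nlinarith⟩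
  · rintro ⟨hx0, hx1⟩
    exact ⟨Real.sqrt x, ⟨Real.sqrt_pos.mpr hx0,
      by rw [show (1:ℝ) = Real.sqrt 1 by simp]; exact Real.sqrt_lt_sqrt hx0.le hx1⟩,
      Real.sq_sqrt hx0.le⟩

lemma ptwise {z : ℝ} (hz0 : 0 < z) (hz1 : z < 1) :
    |2 * z| * (((z^2) ^ ((3:ℝ)/4-1) - (z^2) ^ ((5:ℝ)/4-1)) * (1 - z^2) ^ ((1:ℝ)/2-1) / 2)
      = Real.sqrt (z * (1 - z) / (1 + z)) := by
  have hz : (0:ℝ) ≤ z := hz0.le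
  have h1z : (0:ℝ) < 1 - z := by linarith
  have h1z' : (0:ℝ) < 1 + z := by linarith
  have e1 : (z^2 : ℝ) ^ ((3:ℝ)/4-1) = (Real.sqrt z)⁻¹ := by
    rw [← Real.rpow_natCast z 2, ← Real.rpow_mul hz, Real.sqrt_eq_rpow,
      ← Real.rpow_neg_one (z ^ ((1:ℝ)/2)), ← Real.rpow_mul hz]
    norm_num
  have e2 : (z^2 : ℝ) ^ ((5:ℝ)/4-1) = Real.sqrt z := by
    rw [← Real.rpow_natCast z 2, ← Real.rpow_mul hz, Real.sqrt_eq_rpow]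
    norm_num
  have e3 : (1 - z^2 : ℝ) ^ ((1:ℝ)/2-1) = (Real.sqrt (1-z) * Real.sqrt (1+z))⁻¹ := by
    rw [show (1 - z^2 : ℝ) = (1-z)*(1+z) by ring, ← Real.sqrt_mul h1z.le,
      Real.sqrt_eq_rpow, ← Real.rpow_neg_one (((1-z)*(1+z)) ^ ((1:ℝ)/2)),
      ← Real.rpow_mul (by positivity)]
    norm_num
  have e4 : Real.sqrt (z * (1 - z) / (1 + z))
      = Real.sqrt z * Real.sqrt (1-z) / Real.sqrt (1+z) := by
    rw [Real.sqrt_div (by positivity), Real.sqrt_mul hz]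
  rw [e1, e2, e3, e4, abs_of_pos (by linarith : (0:ℝ) < 2*z)]
  have sz : (0:ℝ) < Real.sqrt z := Real.sqrt_pos.mpr hz0
  have s1 : (0:ℝ) < Real.sqrt (1-z) := Real.sqrt_pos.mpr h1z
  have s2 : (0:ℝ) < Real.sqrt (1+z) := Real.sqrt_pos.mpr h1z'
  have hzz : Real.sqrt z * Real.sqrt z = z := Real.mul_self_sqrt hz
  have h11 : Real.sqrt (1-z) * Real.sqrt (1-z) = 1 - z := Real.mul_self_sqrt h1z.le
  field_simp
  linear_combination (-(z + Real.sqrt (1-z)^2)) * hzz - z * h11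

lemma I_eq_beta :
    ∫ z in (0:ℝ)..1, Real.sqrt (z * (1 - z) / (1 + z))
      = ((∫ t in (0:ℝ)..1, t ^ ((3:ℝ)/4-1) * (1-t) ^ ((1:ℝ)/2-1))
        - ∫ t in (0:ℝ)..1, t ^ ((5:ℝ)/4-1) * (1-t) ^ ((1:ℝ)/2-1)) / 2 := by
  set g : ℝ → ℝ := fun t => (t ^ ((3:ℝ)/4-1) - t ^ ((5:ℝ)/4-1)) * (1-t) ^ ((1:ℝ)/2-1) / 2 with hg
  have hJ : ∫ t in (0:ℝ)..1, g t
      = ((∫ t in (0:ℝ)..1, t ^ ((3:ℝ)/4-1) * (1-t) ^ ((1:ℝ)/2-1))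
        - ∫ t in (0:ℝ)..1, t ^ ((5:ℝ)/4-1) * (1-t) ^ ((1:ℝ)/2-1)) / 2 := by
    rw [show g = fun t => (t ^ ((3:ℝ)/4-1) * (1-t) ^ ((1:ℝ)/2-1)
        - t ^ ((5:ℝ)/4-1) * (1-t) ^ ((1:ℝ)/2-1)) / 2 from funext fun t => by rw [hg]; ring,
      intervalIntegral.integral_div,
      intervalIntegral.integral_sub (betaIntegrable (by norm_num) (by norm_num))
        (betaIntegrable (by norm_num) (by norm_num))]
  have hcov := integral_image_eq_integral_abs_deriv_smul (s := Set.Ioo (0:ℝ) 1)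
    (f := fun z : ℝ => z ^ 2) (f' := fun z : ℝ => 2 * z) measurableSet_Ioo
    (fun x _ => by simpa using (hasDerivAt_pow 2 x).hasDerivWithinAt)
    (fun p hp q hq hpq => by
      have h2 : p ^ 2 = q ^ 2 := hpq
      have := congrArg Real.sqrt h2
      rwa [Real.sqrt_sq hp.1.le, Real.sqrt_sq hq.1.le] at this) g
  rw [sq_image] at hcov
  rw [intervalIntegral.integral_of_le zero_le_one, integral_Ioc_eq_integral_Ioo, ← hJ,
    intervalIntegral.integral_of_le zero_le_one, integral_Ioc_eq_integral_Ioo, hcov]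
  refine setIntegral_congr_fun measurableSet_Ioo fun z hz => ?_
  simp only [smul_eq_mul]
  exact (ptwise hz.1 hz.2).symm

lemma gamma_algebra :
    (Real.Gamma (3/4) * Real.Gamma (1/2) / Real.Gamma (3/4 + 1/2)
      - Real.Gamma (5/4) * Real.Gamma (1/2) / Real.Gamma (5/4 + 1/2)) / 2
    = (4 * Real.Gamma (3/4) ^ 2 + Real.Gamma (-3/4) * Real.Gamma (5/4))
        / (2 * Real.sqrt (2 * Real.pi)) := by
  have h34 : (3/4 + 1/2 : ℝ) = 1/4 + 1 := by norm_num
  have h54' : (5/4 + 1/2 : ℝ) = 3/4 + 1 := by norm_num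
  have h54 : (5/4 : ℝ) = 1/4 + 1 := by norm_num
  have h14 : (1/4 : ℝ) = -3/4 + 1 := by norm_num
  have ga : (0:ℝ) < Real.Gamma (1/4) := Real.Gamma_pos_of_pos (by norm_num)
  have gb : (0:ℝ) < Real.Gamma (3/4) := Real.Gamma_pos_of_pos (by norm_num)
  have hrefl : Real.Gamma (1/4) * Real.Gamma (3/4) = Real.pi / (Real.sqrt 2 / 2) := by
    have := Real.Gamma_mul_Gamma_one_sub (1/4)
    rw [show (1 - 1/4 : ℝ) = 3/4 by norm_num, show (Real.pi * (1/4)) = Real.pi/4 by ring,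
      Real.sin_pi_div_four] at this
    exact this
  have hs2 : Real.sqrt 2 * Real.sqrt 2 = 2 := Real.mul_self_sqrt (by norm_num)
  have hp2 : Real.sqrt Real.pi * Real.sqrt Real.pi = Real.pi := Real.mul_self_sqrt Real.pi_pos.le
  have hsp : Real.sqrt (2 * Real.pi) = Real.sqrt 2 * Real.sqrt Real.pi :=
    Real.sqrt_mul (by norm_num) _
  have hs2' : (0:ℝ) < Real.sqrt 2 := Real.sqrt_pos.mpr (by norm_num)
  have hp' : (0:ℝ) < Real.sqrt Real.pi := Real.sqrt_pos.mpr Real.pi_pos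
  rw [h34, h54', Real.Gamma_add_one (by norm_num : (1/4:ℝ) ≠ 0),
    Real.Gamma_add_one (by norm_num : (3/4:ℝ) ≠ 0), h54,
    Real.Gamma_add_one (by norm_num : (1/4:ℝ) ≠ 0), hsp, Real.Gamma_one_half_eq]
  rw [show Real.Gamma (-3/4) = Real.Gamma (1/4) / (-3/4) by
    rw [h14, Real.Gamma_add_one (by norm_num : (-3/4:ℝ) ≠ 0)]; ring]
  have hab : Real.Gamma (1/4) * Real.Gamma (3/4) * Real.sqrt 2 = 2 * Real.pi := by
    rw [hrefl, div_mul_eq_mul_div,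
      div_eq_iff (ne_of_gt (by positivity : (0:ℝ) < Real.sqrt 2 / 2))]
    ring
  have hab2 : Real.Gamma (1/4) * Real.Gamma (3/4) * Real.sqrt 2
      = 2 * (Real.sqrt Real.pi * Real.sqrt Real.pi) := by rw [hp2]; exact hab
  field_simp
  linear_combination (12*Real.Gamma (3/4)^2 - Real.Gamma (1/4)^2) *
    (-(Real.sqrt 2/2) * hab2 + (Real.Gamma (1/4)*Real.Gamma (3/4)/2) * hs2)

lemma h_one : h 1 = -2 * ∫ z in (0:ℝ)..1, Real.sqrt (z * (1 - z) / (1 + z)) := by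
  rw [h, show (1:ℝ)/1 = 1 by norm_num, ← intervalIntegral.integral_const_mul]
  refine intervalIntegral.integral_congr fun z hz => ?_
  rw [Set.uIcc_of_le zero_le_one] at hz
  have h1z : (0:ℝ) < 1 + z := by linarith [hz.1]
  have hu : u 1 z = Real.sqrt (z * (1 - z) / (1 + z)) := by
    rw [u, show z * (1 - 1 * z) / (z + 1) = z * (1 - z) / (1 + z) by ring]
  rw [hu, show (-1 + z + 1 * (2 - 3 * z + 1 * (-4 + 4 * 1 + 3 * z))) = 1 + z by ring,
    mul_div_assoc, div_self h1z.ne', mul_one]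

lemma I_pos : 0 < ∫ z in (0:ℝ)..1, Real.sqrt (z * (1 - z) / (1 + z)) := by
  refine intervalIntegral.intervalIntegral_pos_of_pos_on ?_ (fun z hz => ?_) zero_lt_one
  · apply ContinuousOn.intervalIntegrable
    apply Real.continuous_sqrt.comp_continuousOn
    apply ContinuousOn.div (by fun_prop) (by fun_prop)
    intro z hz
    rw [Set.uIcc_of_le zero_le_one] at hz
    have := hz.1
    positivity
  · have h1 : 0 < z * (1 - z) / (1 + z) := by
      have := hz.1; have := hz.2
      have : (0:ℝ) < 1 - z := by linarith
      positivity
    exact Real.sqrt_pos.mpr h1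

theorem stmt_8 :
    (∫ z in (0:ℝ)..1, Real.sqrt (z * (1 - z) / (1 + z)))
      = (4 * Real.Gamma (3/4) ^ 2 + Real.Gamma (-3/4) * Real.Gamma (5/4))
          / (2 * Real.sqrt (2 * Real.pi)) ∧
    h 1 = -((4 * Real.Gamma (3/4) ^ 2 + Real.Gamma (-3/4) * Real.Gamma (5/4))
          / Real.sqrt (2 * Real.pi)) ∧
    h 1 < 0 := by
  have e1 : ∫ t in (0:ℝ)..1, t ^ ((3:ℝ)/4-1) * (1-t) ^ ((1:ℝ)/2-1)
      = Real.Gamma (3/4) * Real.Gamma (1/2) / Real.Gamma (3/4 + 1/2) :=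
    realBeta (by norm_num) (by norm_num)
  have e2 : ∫ t in (0:ℝ)..1, t ^ ((5:ℝ)/4-1) * (1-t) ^ ((1:ℝ)/2-1)
      = Real.Gamma (5/4) * Real.Gamma (1/2) / Real.Gamma (5/4 + 1/2) :=
    realBeta (by norm_num) (by norm_num)
  have first : (∫ z in (0:ℝ)..1, Real.sqrt (z * (1 - z) / (1 + z)))
      = (4 * Real.Gamma (3/4) ^ 2 + Real.Gamma (-3/4) * Real.Gamma (5/4))
          / (2 * Real.sqrt (2 * Real.pi)) := by
    rw [I_eq_beta, e1, e2]
    exact gamma_algebra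
  refine ⟨first, ?_, ?_⟩
  · rw [h_one, first]; ring
  · rw [h_one]; nlinarith [I_pos]
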